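/- Let n ≥ 1 and let Q ⊆ ℝ^n × ℝ be an open set satisfying condition (A) with constant θ₀ ∈ (0,1), and assume ∂_p Q ≠ ∅. Let X ∈ Q and set ρ := inf{|X−Y| : Y ∈ ∂_p Q}, the parabolic distance from X to ∂_p Q. Then for every r ≥ 4ρ/θ₀ one has |C_r(X) \ Q| > θ₀ · 2^{−n−2} · |C_r|. -/

import Mathlib

open MeasureTheory Real Set Metric Filter

noncomputable section

/-- The space ℝ^n × ℝ (spatial × time). -/
abbrev Spc (n : ℕ) := EuclideanSpace ℝ (Fin n) × ℝ

/-- Parabolic cylinder C_r(Y) = B_r(y) × (s - r², s). -/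
def pCyl (n : ℕ) (Y : Spc n) (r : ℝ) : Set (Spc n) :=
  (Metric.ball Y.1 r) ×ˢ (Set.Ioo (Y.2 - r ^ 2) Y.2)

/-- |C_r|: the measure of a parabolic cylinder of radius r. -/
def cylVol (n : ℕ) (r : ℝ) : ENNReal :=
  volume (pCyl n ((0 : EuclideanSpace ℝ (Fin n)), (0 : ℝ)) r)

/-- The parabolic boundary of an open set Q. -/
def pBoundary (n : ℕ) (Q : Set (Spc n)) : Set (Spc n) :=
  {X | X ∈ frontier Q ∧ ∃ δ > (0 : ℝ), ∃ γ : ℝ → EuclideanSpace ℝ (Fin n),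
    ContinuousOn γ (Set.Ico X.2 (X.2 + δ)) ∧ γ X.2 = X.1 ∧
    ∀ t ∈ Set.Ioo X.2 (X.2 + δ), (γ t, t) ∈ Q}

/-- Condition (A): exterior measure condition. -/
def condA (n : ℕ) (Q : Set (Spc n)) (θ₀ : ℝ) : Prop :=
  ∀ X ∈ pBoundary n Q, ∀ r > (0 : ℝ),
    ENNReal.ofReal θ₀ * cylVol n r < volume (pCyl n X r \ Q)

/-- Parabolic distance. -/
def pDist (n : ℕ) (X Y : Spc n) : ℝ := max ‖X.1 - Y.1‖ (Real.sqrt |X.2 - Y.2|)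

/-- The fundamental solution of the heat equation. -/
def heatF (n : ℕ) (x : EuclideanSpace ℝ (Fin n)) (t : ℝ) : ℝ :=
  if 0 < t then (4 * π * t) ^ (-(n : ℝ) / 2) * Real.exp (-‖x‖ ^ 2 / (4 * t)) else 0

/-- Heat ball E(X, r). -/
def heatBall (n : ℕ) (X : Spc n) (r : ℝ) : Set (Spc n) :=
  {Y | r ≤ heatF n (X.1 - Y.1) (X.2 - Y.2)}

/-- Thermal capacity of a set. -/
def thermalCap (n : ℕ) (K : Set (Spc n)) : ENNReal :=
  sSup {m : ENNReal | ∃ μ : Measure (Spc n), IsFiniteMeasure μ ∧ μ Kᶜ = 0 ∧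
    (∀ X : Spc n, ∫⁻ Y, ENNReal.ofReal (heatF n (X.1 - Y.1) (X.2 - Y.2)) ∂μ ≤ 1) ∧
    m = μ Set.univ}

/-- Heat shell {Y : a ≤ F(Y₀ - Y) ≤ b}. -/
def heatShell (n : ℕ) (Y₀ : Spc n) (a b : ℝ) : Set (Spc n) :=
  {Y | a ≤ heatF n (Y₀.1 - Y.1) (Y₀.2 - Y.2) ∧ heatF n (Y₀.1 - Y.1) (Y₀.2 - Y.2) ≤ b}


lemma pDist_nonneg' (n : ℕ) (X Y : Spc n) : 0 ≤ pDist n X Y :=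
  le_trans (norm_nonneg _) (le_max_left _ _)

lemma key_real (n : ℕ) (hn : 1 ≤ n) (θ₀ r ρ' : ℝ) (hθ : 0 < θ₀) (hθ1 : θ₀ < 1)
    (hr : 0 < r) (hρ'0 : 0 ≤ ρ') (hρ' : ρ' ≤ 26/100*θ₀*r) :
    θ₀ * (2:ℝ)^(-(n:ℤ)-2) * (r^n * r^2) + (9/16*r)^n * ρ'^2 ≤ θ₀ * ((9/16*r)^n * (9/16*r)^2) := by
  have hz : (2:ℝ)^(-(n:ℤ)-2) = (1/4) * (1/2:ℝ)^n := by
    rw [show -(n:ℤ)-2 = -((n+2:ℕ):ℤ) by push_cast; ring, zpow_neg, zpow_natCast, pow_add]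
    rw [mul_inv, ← inv_pow]; norm_num; ring
  have h89 : ((8:ℝ)/9)^n ≤ 8/9 := by
    calc ((8:ℝ)/9)^n ≤ (8/9)^1 := pow_le_pow_of_le_one (by norm_num) (by norm_num) hn
    _ = 8/9 := pow_one _
  have hu0 : (0:ℝ) ≤ (9/16:ℝ)^n := by positivity
  have hw0 : (0:ℝ) ≤ r^n := by positivity
  have hv : ((1:ℝ)/2)^n ≤ 8/9 * (9/16:ℝ)^n := by
    have e : ((1:ℝ)/2)^n = (8/9:ℝ)^n * (9/16:ℝ)^n := by rw [← mul_pow]; norm_num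
    rw [e]; exact mul_le_mul_of_nonneg_right h89 hu0
  have hρ2 : ρ'^2 ≤ (26/100)^2 * θ₀^2 * r^2 := by nlinarith
  have hθ2 : θ₀^2 ≤ θ₀ := by nlinarith
  rw [hz, mul_pow]
  set u := (9/16:ℝ)^n
  set w := r^n
  set v := (1/2:ℝ)^n
  have hA1 : θ₀ * ((1/4)*v) * (w*r^2) ≤ (2/9)*(θ₀*u*(w*r^2)) := by
    nlinarith [mul_le_mul_of_nonneg_left hv (by positivity : (0:ℝ) ≤ θ₀*(w*r^2)/4)]
  have hA2 : (u*w)*ρ'^2 ≤ (676/10000)*(θ₀*u*(w*r^2)) := by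
    nlinarith [mul_le_mul_of_nonneg_left hρ2 (mul_nonneg hu0 hw0),
      mul_le_mul_of_nonneg_left hθ2 (by positivity : (0:ℝ) ≤ u*w*r^2)]
  have hA3 : 0 ≤ θ₀*u*(w*r^2) := by positivity
  nlinarith [hA1, hA2, hA3]

lemma vol_pCyl (n : ℕ) (hn : 1 ≤ n) (Y : Spc n) (r : ℝ) (hr : 0 ≤ r) :
    volume (pCyl n Y r) =
      ENNReal.ofReal (r ^ n) * volume (Metric.ball (0 : EuclideanSpace ℝ (Fin n)) 1) *
        ENNReal.ofReal (r ^ 2) := by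
  haveI : Nonempty (Fin n) := ⟨⟨0, hn⟩⟩
  unfold pCyl
  rw [Measure.volume_eq_prod, Measure.prod_prod, Real.volume_Ioo,
    Measure.addHaar_ball volume Y.1 hr, finrank_euclideanSpace_fin]
  congr 1
  ring_nf

lemma vol_slab (n : ℕ) (hn : 1 ≤ n) (y : EuclideanSpace ℝ (Fin n)) (R a b : ℝ) (hR : 0 ≤ R) :
    volume ((Metric.ball y R) ×ˢ (Set.Ico a b)) =
      ENNReal.ofReal (R ^ n) * volume (Metric.ball (0 : EuclideanSpace ℝ (Fin n)) 1) *
        ENNReal.ofReal (b - a) := by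
  haveI : Nonempty (Fin n) := ⟨⟨0, hn⟩⟩
  rw [Measure.volume_eq_prod, Measure.prod_prod, Real.volume_Ico,
    Measure.addHaar_ball volume y hR, finrank_euclideanSpace_fin]

set_option maxHeartbeats 1000000 in
/-- interior measure condition for large radii. -/
theorem condA_interior_measure
    (n : ℕ) (hn : 1 ≤ n) (Q : Set (Spc n)) (hQ : IsOpen Q)
    (θ₀ : ℝ) (hθ₀ : θ₀ ∈ Set.Ioo (0 : ℝ) 1) (hA : condA n Q θ₀)
    (hne : (pBoundary n Q).Nonempty)
    (X : Spc n) (hX : X ∈ Q)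
    (ρ : ℝ) (hρ : ρ = sInf (pDist n X '' pBoundary n Q)) :
    ∀ r : ℝ, 4 * ρ / θ₀ ≤ r →
      ENNReal.ofReal (θ₀ * (2 : ℝ) ^ (-(n : ℤ) - 2)) * cylVol n r <
        volume (pCyl n X r \ Q) := by
  obtain ⟨hθpos, hθlt⟩ := hθ₀
  intro r hrr
  -- ρ > 0
  obtain ⟨ε, hε, hball⟩ := Metric.isOpen_iff.mp hQ X hX
  set η := min ε 1 with hη
  have hηpos : 0 < η := lt_min hε one_pos
  have hη1 : η ≤ 1 := min_le_right _ _
  have hηε : η ≤ ε := min_le_left _ _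
  have hbound : ∀ b ∈ pDist n X '' pBoundary n Q, η ≤ b := by
    rintro b ⟨Y, hY, rfl⟩
    by_contra hcon
    push_neg at hcon
    have h1 : ‖X.1 - Y.1‖ < η := lt_of_le_of_lt (le_max_left _ _) hcon
    have h2 : Real.sqrt |X.2 - Y.2| < η := lt_of_le_of_lt (le_max_right _ _) hcon
    have h2' : |X.2 - Y.2| < η := by
      nlinarith [Real.sq_sqrt (abs_nonneg (X.2 - Y.2)), Real.sqrt_nonneg |X.2 - Y.2|]
    have hmem : Y ∈ Metric.ball X ε := by
      rw [Metric.mem_ball, Prod.dist_eq]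
      have e1 : dist Y.1 X.1 < ε := by
        rw [dist_eq_norm, norm_sub_rev]; exact lt_of_lt_of_le h1 hηε
      have e2 : dist Y.2 X.2 < ε := by
        rw [Real.dist_eq, abs_sub_comm]; exact lt_of_lt_of_le h2' hηε
      exact max_lt e1 e2
    exact (hQ.interior_eq ▸ hY.1.2) (hball hmem)
  have hρpos : 0 < ρ := by
    rw [hρ]
    exact lt_of_lt_of_le hηpos (le_csInf (hne.image _) hbound)
  have hrpos : 0 < r := lt_of_lt_of_le (by positivity) hrr
  have hρle : ρ ≤ θ₀ * r / 4 := by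
    rw [div_le_iff₀ hθpos] at hrr; linarith
  -- choose a near-optimal boundary point Y
  have hSbdd : BddBelow (pDist n X '' pBoundary n Q) := by
    refine ⟨0, ?_⟩
    rintro b ⟨Y, hY, rfl⟩
    exact pDist_nonneg' n X Y
  obtain ⟨Y, hY, hYlt⟩ : ∃ Y ∈ pBoundary n Q, pDist n X Y < ρ + θ₀*r/100 := by
    have hlt : sInf (pDist n X '' pBoundary n Q) < ρ + θ₀*r/100 := by
      rw [← hρ]; have : 0 < θ₀*r/100 := by positivity
      linarith
    obtain ⟨b, ⟨Z, hZ, rfl⟩, hb⟩ := (csInf_lt_iff hSbdd (hne.image _)).mp hlt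
    exact ⟨Z, hZ, hb⟩
  set ρ' := pDist n X Y with hρ'def
  have hρ'0 : 0 ≤ ρ' := pDist_nonneg' n X Y
  have hρ'le : ρ' ≤ 26/100*θ₀*r := by
    have := hYlt; linarith
  have hxy : ‖X.1 - Y.1‖ ≤ ρ' := le_max_left _ _
  have hts : |X.2 - Y.2| ≤ ρ'^2 := by
    have h : Real.sqrt |X.2 - Y.2| ≤ ρ' := le_max_right _ _
    nlinarith [Real.sq_sqrt (abs_nonneg (X.2 - Y.2)), Real.sqrt_nonneg |X.2 - Y.2|]
  set R := 9/16*r with hRdef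
  have hRpos : 0 < R := by positivity
  -- subset lemma
  have hsub : pCyl n Y R \ Q ⊆ (pCyl n X r \ Q) ∪ (Metric.ball Y.1 R ×ˢ Set.Ico X.2 Y.2) := by
    rintro ⟨z, τ⟩ ⟨hmem, hnQ⟩
    obtain ⟨hz, hτ1, hτ2⟩ := hmem
    simp only [Metric.mem_ball] at hz
    by_cases hcase : τ < X.2
    · left
      refine ⟨⟨?_, ?_, hcase⟩, hnQ⟩
      · rw [Metric.mem_ball]
        have t1 : dist z X.1 ≤ dist z Y.1 + dist Y.1 X.1 := dist_triangle _ _ _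
        have t2 : dist Y.1 X.1 ≤ ρ' := by rw [dist_eq_norm, norm_sub_rev]; exact hxy
        nlinarith
      · have hY2 : X.2 - ρ'^2 ≤ Y.2 := by
          have := abs_le.mp hts
          linarith [this.1]
        have hθ2 : θ₀^2 ≤ 1 := by nlinarith
        have : Y.2 - R^2 ≥ X.2 - r^2 := by
          rw [hRdef]
          nlinarith [mul_self_le_mul_self hρ'0 hρ'le, sq_nonneg r, hrpos.le]
        linarith
    · right
      exact ⟨hz, ⟨not_lt.mp hcase, hτ2⟩⟩
  -- measure computations
  have hB1top : volume (Metric.ball (0 : EuclideanSpace ℝ (Fin n)) 1) ≠ ⊤ :=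
    measure_ball_lt_top.ne
  have hcylr : cylVol n r = ENNReal.ofReal (r^n) *
      volume (Metric.ball (0 : EuclideanSpace ℝ (Fin n)) 1) * ENNReal.ofReal (r^2) :=
    vol_pCyl n hn _ r hrpos.le
  have hcylR : cylVol n R = ENNReal.ofReal (R^n) *
      volume (Metric.ball (0 : EuclideanSpace ℝ (Fin n)) 1) * ENNReal.ofReal (R^2) :=
    vol_pCyl n hn _ R hRpos.le
  have hO : volume (Metric.ball Y.1 R ×ˢ Set.Ico X.2 Y.2) ≤
      ENNReal.ofReal (R^n * ρ'^2) * volume (Metric.ball (0 : EuclideanSpace ℝ (Fin n)) 1) := by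
    rw [vol_slab n hn Y.1 R X.2 Y.2 hRpos.le]
    calc ENNReal.ofReal (R^n) * volume (Metric.ball (0 : EuclideanSpace ℝ (Fin n)) 1) *
          ENNReal.ofReal (Y.2 - X.2)
        ≤ ENNReal.ofReal (R^n) * volume (Metric.ball (0 : EuclideanSpace ℝ (Fin n)) 1) *
          ENNReal.ofReal (ρ'^2) := by
          gcongr
          linarith [(abs_le.mp hts).1]
      _ = ENNReal.ofReal (R^n * ρ'^2) *
            volume (Metric.ball (0 : EuclideanSpace ℝ (Fin n)) 1) := by
          rw [ENNReal.ofReal_mul (by positivity : (0:ℝ) ≤ R^n)]; ring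
  have hDtop : ENNReal.ofReal (R^n * ρ'^2) *
      volume (Metric.ball (0 : EuclideanSpace ℝ (Fin n)) 1) ≠ ⊤ :=
    ENNReal.mul_ne_top ENNReal.ofReal_ne_top hB1top
  -- key ENNReal inequality
  have hkey : ENNReal.ofReal (θ₀ * (2:ℝ)^(-(n:ℤ)-2)) * cylVol n r +
      ENNReal.ofReal (R^n * ρ'^2) * volume (Metric.ball (0 : EuclideanSpace ℝ (Fin n)) 1) ≤
      ENNReal.ofReal θ₀ * cylVol n R := by
    rw [hcylr, hcylR]
    have e1 : ENNReal.ofReal (θ₀ * (2:ℝ)^(-(n:ℤ)-2)) * (ENNReal.ofReal (r^n) *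
          volume (Metric.ball (0 : EuclideanSpace ℝ (Fin n)) 1) * ENNReal.ofReal (r^2))
        = ENNReal.ofReal (θ₀ * (2:ℝ)^(-(n:ℤ)-2) * (r^n * r^2)) *
          volume (Metric.ball (0 : EuclideanSpace ℝ (Fin n)) 1) := by
      rw [ENNReal.ofReal_mul (by positivity : (0:ℝ) ≤ θ₀ * (2:ℝ)^(-(n:ℤ)-2)),
        ENNReal.ofReal_mul (by positivity : (0:ℝ) ≤ r^n)]
      ring
    have e2 : ENNReal.ofReal θ₀ * (ENNReal.ofReal (R^n) *
          volume (Metric.ball (0 : EuclideanSpace ℝ (Fin n)) 1) * ENNReal.ofReal (R^2))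
        = ENNReal.ofReal (θ₀ * (R^n * R^2)) *
          volume (Metric.ball (0 : EuclideanSpace ℝ (Fin n)) 1) := by
      rw [ENNReal.ofReal_mul hθpos.le, ENNReal.ofReal_mul (by positivity : (0:ℝ) ≤ R^n)]
      ring
    rw [e1, e2, ← add_mul, ← ENNReal.ofReal_add (by positivity) (by positivity)]
    refine mul_le_mul_of_nonneg_right ?_ zero_le
    apply ENNReal.ofReal_le_ofReal
    rw [hRdef]
    exact key_real n hn θ₀ r ρ' hθpos hθlt hrpos hρ'0 hρ'le
  -- conclude
  have h1 : ENNReal.ofReal θ₀ * cylVol n R < volume (pCyl n Y R \ Q) := hA Y hY R hRpos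
  have h2 : volume (pCyl n Y R \ Q) ≤ volume (pCyl n X r \ Q) +
      ENNReal.ofReal (R^n * ρ'^2) * volume (Metric.ball (0 : EuclideanSpace ℝ (Fin n)) 1) := by
    calc volume (pCyl n Y R \ Q)
        ≤ volume ((pCyl n X r \ Q) ∪ (Metric.ball Y.1 R ×ˢ Set.Ico X.2 Y.2)) := measure_mono hsub
      _ ≤ volume (pCyl n X r \ Q) + volume (Metric.ball Y.1 R ×ˢ Set.Ico X.2 Y.2) :=
          measure_union_le _ _
      _ ≤ _ := add_le_add le_rfl hO
  exact (ENNReal.add_lt_add_iff_right hDtop).mp (lt_of_le_of_lt hkey (lt_of_lt_of_le h1 h2))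



end
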